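/- Let V be a real inner product space and let Λ be the ℤ-span of ℝ-linearly independent vectors β₁, β₂, β₃ ∈ V, and assume the inner product ⟪·,·⟫ takes integer values on Λ × Λ. Suppose (β₁, β₂, β₃) is a successive minimal basis of Λ, with successive minima D₁ = ‖β₁‖² ≤ D₂ = ‖β₂‖² ≤ D₃ = ‖β₃‖². Then there exist signs ε₂, ε₃ ∈ {1, −1} such that, setting x = ⟪β₁, ε₂β₂⟫, y = ⟪β₁, ε₃β₃⟫, z = ⟪ε₂β₂, ε₃β₃⟫, the values x, y, z are integers satisfying 0 ≤ x ≤ D₁/2, 0 ≤ y ≤ D₁/2, and |z| ≤ D₂/2; i.e., the basis (β₁, ε₂β₂, ε₃β₃) has Gram matrix [[D₁, x, y], [x, D₂, z], [y, z, D₃]] with these bounds. -/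

import Mathlib

open scoped RealInnerProductSpace

/-- The `i`-th successive minimum (squared-norm convention) of a `ℤ`-submodule `Λ` of a real
inner product space: the smallest `D` such that the `ℝ`-span of the vectors of `Λ` of squared
norm at most `D` has dimension at least `i`. -/
noncomputable def succMin {V : Type*} [NormedAddCommGroup V] [InnerProductSpace ℝ V]
    (Λ : Submodule ℤ V) (i : ℕ) : ℝ :=
  sInf {D : ℝ | i ≤ Module.finrank ℝ (Submodule.span ℝ {x : V | x ∈ Λ ∧ ‖x‖ ^ 2 ≤ D})}

/-- If `(β₁, β₂, β₃)` is a successive minimal basis of the lattice `Λ` it spans (on which the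
inner product is integer-valued), then after replacing `β₂, β₃` by `±β₂, ±β₃` the Gram matrix
has the normalized form `[[D₁, x, y], [x, D₂, z], [y, z, D₃]]` with `x, y, z ∈ ℤ`,
`0 ≤ x ≤ D₁/2`, `0 ≤ y ≤ D₁/2` and `|z| ≤ D₂/2`. -/
theorem stmt_4 {V : Type*} [NormedAddCommGroup V] [InnerProductSpace ℝ V]
    (β₁ β₂ β₃ : V) (hind : LinearIndependent ℝ ![β₁, β₂, β₃])
    (hint : ∀ u ∈ Submodule.span ℤ ({β₁, β₂, β₃} : Set V),
      ∀ v ∈ Submodule.span ℤ ({β₁, β₂, β₃} : Set V), ∃ n : ℤ, ⟪u, v⟫ = (n : ℝ))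
    (h₁ : ‖β₁‖ ^ 2 = succMin (Submodule.span ℤ ({β₁, β₂, β₃} : Set V)) 1)
    (h₂ : ‖β₂‖ ^ 2 = succMin (Submodule.span ℤ ({β₁, β₂, β₃} : Set V)) 2)
    (h₃ : ‖β₃‖ ^ 2 = succMin (Submodule.span ℤ ({β₁, β₂, β₃} : Set V)) 3)
    (h₁₂ : ‖β₁‖ ^ 2 ≤ ‖β₂‖ ^ 2) (h₂₃ : ‖β₂‖ ^ 2 ≤ ‖β₃‖ ^ 2) :
    ∃ ε₂ ε₃ : ℝ, (ε₂ = 1 ∨ ε₂ = -1) ∧ (ε₃ = 1 ∨ ε₃ = -1) ∧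
      ∃ x y z : ℤ,
        ⟪β₁, ε₂ • β₂⟫ = (x : ℝ) ∧ ⟪β₁, ε₃ • β₃⟫ = (y : ℝ) ∧ ⟪ε₂ • β₂, ε₃ • β₃⟫ = (z : ℝ) ∧
        0 ≤ (x : ℝ) ∧ 2 * (x : ℝ) ≤ ‖β₁‖ ^ 2 ∧
        0 ≤ (y : ℝ) ∧ 2 * (y : ℝ) ≤ ‖β₁‖ ^ 2 ∧
        2 * |(z : ℝ)| ≤ ‖β₂‖ ^ 2 := by
  classical
  set Λ : Submodule ℤ V := Submodule.span ℤ ({β₁, β₂, β₃} : Set V) with hΛdef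
  have hm1 : β₁ ∈ Λ := Submodule.subset_span (by simp)
  have hm2 : β₂ ∈ Λ := Submodule.subset_span (by simp)
  have hm3 : β₃ ∈ Λ := Submodule.subset_span (by simp)
  -- coefficient extraction from linear independence
  have hco : ∀ a b c : ℝ, a • β₁ + b • β₂ + c • β₃ = 0 → a = 0 ∧ b = 0 ∧ c = 0 := by
    intro a b c h
    have h3 := Fintype.linearIndependent_iff.mp hind ![a, b, c] (by
      simpa [Fin.sum_univ_three] using h)
    exact ⟨h3 0, h3 1, h3 2⟩
  -- every lattice element lies in the real span of the basis
  have hΛle : ∀ x ∈ Λ, x ∈ Submodule.span ℝ ({β₁, β₂, β₃} : Set V) := fun x hx =>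
    Submodule.span_le_restrictScalars ℤ ℝ ({β₁, β₂, β₃} : Set V) hx
  haveI hfin : FiniteDimensional ℝ (Submodule.span ℝ ({β₁, β₂, β₃} : Set V)) :=
    FiniteDimensional.span_of_finite ℝ (Set.toFinite _)
  -- membership in the defining sets of the successive minima
  have hmemS : ∀ (k : ℕ) (v : Fin k → V) (D : ℝ),
      LinearIndependent ℝ v → (∀ i, v i ∈ Λ) → (∀ i, ‖v i‖ ^ 2 ≤ D) →
      k ≤ Module.finrank ℝ (Submodule.span ℝ {x : V | x ∈ Λ ∧ ‖x‖ ^ 2 ≤ D}) := by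
    intro k v D hv hvΛ hvD
    have hsub : Set.range v ⊆ {x : V | x ∈ Λ ∧ ‖x‖ ^ 2 ≤ D} := by
      rintro _ ⟨i, rfl⟩; exact ⟨hvΛ i, hvD i⟩
    have hle : Submodule.span ℝ (Set.range v) ≤
        Submodule.span ℝ {x : V | x ∈ Λ ∧ ‖x‖ ^ 2 ≤ D} := Submodule.span_mono hsub
    have hle2 : Submodule.span ℝ {x : V | x ∈ Λ ∧ ‖x‖ ^ 2 ≤ D} ≤
        Submodule.span ℝ ({β₁, β₂, β₃} : Set V) := by
      rw [Submodule.span_le]; exact fun x hx => hΛle x hx.1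
    haveI : FiniteDimensional ℝ (Submodule.span ℝ {x : V | x ∈ Λ ∧ ‖x‖ ^ 2 ≤ D}) :=
      Submodule.finiteDimensional_of_le hle2
    calc k = Module.finrank ℝ (Submodule.span ℝ (Set.range v)) := by
            rw [finrank_span_eq_card hv, Fintype.card_fin]
      _ ≤ _ := Submodule.finrank_mono hle
  -- the defining sets are bounded below
  have hbdd : ∀ i : ℕ, 0 < i → BddBelow {D : ℝ |
      i ≤ Module.finrank ℝ (Submodule.span ℝ {x : V | x ∈ Λ ∧ ‖x‖ ^ 2 ≤ D})} := by
    intro i hi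
    refine ⟨0, fun D hD => ?_⟩
    by_contra hD0
    push_neg at hD0
    have hempty : {x : V | x ∈ Λ ∧ ‖x‖ ^ 2 ≤ D} = (∅ : Set V) := by
      ext x
      simp only [Set.mem_setOf_eq, Set.mem_empty_iff_false, iff_false, not_and, not_le]
      intro _
      exact lt_of_lt_of_le hD0 (by positivity)
    simp only [Set.mem_setOf_eq] at hD
    rw [hempty, Submodule.span_empty] at hD
    rw [finrank_bot] at hD
    omega
  -- Claim A : first minimum
  have hA : ∀ w : V, w ∈ Λ → w ≠ 0 → ‖β₁‖ ^ 2 ≤ ‖w‖ ^ 2 := by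
    intro w hw hw0
    rw [h₁]
    unfold succMin
    refine csInf_le (hbdd 1 one_pos) ?_
    exact hmemS 1 ![w] _ (LinearIndependent.of_subsingleton (v := ![w]) 0 (by simpa using hw0))
      (fun i => by fin_cases i <;> simpa) (fun i => by fin_cases i <;> simp)
  -- Claim B : second minimum
  have hB : ∀ w : V, w ∈ Λ → LinearIndependent ℝ ![β₁, w] → ‖β₂‖ ^ 2 ≤ ‖w‖ ^ 2 := by
    intro w hw hiw
    by_contra hlt
    push_neg at hlt
    have hw0 : w ≠ 0 := hiw.ne_zero 1
    have hD : ‖β₂‖ ^ 2 ≤ max (‖β₁‖ ^ 2) (‖w‖ ^ 2) := by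
      rw [h₂]
      unfold succMin
      refine csInf_le (hbdd 2 two_pos) ?_
      exact hmemS 2 ![β₁, w] _ hiw (fun i => by fin_cases i <;> simpa)
        (fun i => by fin_cases i <;> simp)
    have hAw := hA w hw hw0
    rcases max_cases (‖β₁‖ ^ 2) (‖w‖ ^ 2) with ⟨hm, _⟩ | ⟨hm, _⟩ <;> rw [hm] at hD <;> linarith
  -- Claim C : third minimum
  have hC : ∀ w : V, w ∈ Λ → LinearIndependent ℝ ![β₁, β₂, w] → ‖β₃‖ ^ 2 ≤ ‖w‖ ^ 2 := by
    intro w hw hiw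
    by_contra hlt
    push_neg at hlt
    have hpair : LinearIndependent ℝ ![β₁, w] := by
      rw [LinearIndependent.pair_iff]
      intro s t hst
      have h3 := Fintype.linearIndependent_iff.mp hiw ![s, 0, t] (by
        simpa [Fin.sum_univ_three] using hst)
      exact ⟨h3 0, h3 2⟩
    have hBw := hB w hw hpair
    have hD : ‖β₃‖ ^ 2 ≤ max (max (‖β₁‖ ^ 2) (‖β₂‖ ^ 2)) (‖w‖ ^ 2) := by
      rw [h₃]
      unfold succMin
      refine csInf_le (hbdd 3 (by norm_num)) ?_
      refine hmemS 3 ![β₁, β₂, w] _ hiw (fun i => by fin_cases i <;> simpa)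
        (fun i => by fin_cases i <;> simp [le_max_left, le_max_right])
    rw [max_eq_right h₁₂, max_eq_right hBw] at hD
    linarith
  -- linear independence of perturbed families
  have hpair' : ∀ s : ℝ, LinearIndependent ℝ ![β₁, β₂ + s • β₁] := by
    intro s
    rw [LinearIndependent.pair_iff]
    intro a b hab
    have h : (a + b * s) • β₁ + b • β₂ + (0 : ℝ) • β₃ = 0 := by
      rw [← hab]; module
    obtain ⟨h1, h2, -⟩ := hco _ _ _ h
    rw [h2] at h1 ⊢
    simp only [zero_mul, add_zero] at h1
    exact ⟨h1, rfl⟩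
  have htrip : ∀ s t : ℝ, LinearIndependent ℝ ![β₁, β₂, β₃ + (s • β₁ + t • β₂)] := by
    intro s t
    refine Fintype.linearIndependent_iff.mpr fun g hg => ?_
    rw [Fin.sum_univ_three] at hg
    simp only [Matrix.cons_val_zero, Matrix.cons_val_one, Matrix.head_cons,
      Matrix.cons_val_two, Matrix.tail_cons] at hg
    have h : (g 0 + g 2 * s) • β₁ + (g 1 + g 2 * t) • β₂ + g 2 • β₃ = 0 := by
      rw [← hg]; module
    obtain ⟨h1, h2, h3⟩ := hco _ _ _ h
    rw [h3] at h1 h2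
    simp only [zero_mul, add_zero] at h1 h2
    intro i
    fin_cases i <;> assumption
  -- key inner product bounds
  have key12 : 2 * |⟪β₁, β₂⟫| ≤ ‖β₁‖ ^ 2 := by
    have hp : ‖β₂‖ ^ 2 ≤ ‖β₂ + β₁‖ ^ 2 := by
      refine hB _ (Λ.add_mem hm2 hm1) ?_
      have := hpair' 1; rwa [one_smul] at this
    have hn : ‖β₂‖ ^ 2 ≤ ‖β₂ - β₁‖ ^ 2 := by
      refine hB _ (Λ.sub_mem hm2 hm1) ?_
      have := hpair' (-1)
      rwa [neg_one_smul, ← sub_eq_add_neg] at this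
    rw [norm_add_sq_real] at hp
    rw [norm_sub_sq_real] at hn
    have hc : ⟪β₁, β₂⟫ = ⟪β₂, β₁⟫ := real_inner_comm _ _
    rcases abs_cases ⟪β₁, β₂⟫ with ⟨ha, _⟩ | ⟨ha, _⟩ <;> rw [ha] <;> linarith
  have key13 : 2 * |⟪β₁, β₃⟫| ≤ ‖β₁‖ ^ 2 := by
    have hp : ‖β₃‖ ^ 2 ≤ ‖β₃ + β₁‖ ^ 2 := by
      refine hC _ (Λ.add_mem hm3 hm1) ?_
      have := htrip 1 0; rwa [one_smul, zero_smul, add_zero] at this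
    have hn : ‖β₃‖ ^ 2 ≤ ‖β₃ - β₁‖ ^ 2 := by
      refine hC _ (Λ.sub_mem hm3 hm1) ?_
      have := htrip (-1) 0
      rwa [neg_one_smul, zero_smul, add_zero, ← sub_eq_add_neg] at this
    rw [norm_add_sq_real] at hp
    rw [norm_sub_sq_real] at hn
    have hc : ⟪β₁, β₃⟫ = ⟪β₃, β₁⟫ := real_inner_comm _ _
    rcases abs_cases ⟪β₁, β₃⟫ with ⟨ha, _⟩ | ⟨ha, _⟩ <;> rw [ha] <;> linarith
  have key23 : 2 * |⟪β₂, β₃⟫| ≤ ‖β₂‖ ^ 2 := by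
    have hp : ‖β₃‖ ^ 2 ≤ ‖β₃ + β₂‖ ^ 2 := by
      refine hC _ (Λ.add_mem hm3 hm2) ?_
      have := htrip 0 1; rwa [one_smul, zero_smul, zero_add] at this
    have hn : ‖β₃‖ ^ 2 ≤ ‖β₃ - β₂‖ ^ 2 := by
      refine hC _ (Λ.sub_mem hm3 hm2) ?_
      have := htrip 0 (-1)
      rwa [neg_one_smul, zero_smul, zero_add, ← sub_eq_add_neg] at this
    rw [norm_add_sq_real] at hp
    rw [norm_sub_sq_real] at hn
    have hc : ⟪β₂, β₃⟫ = ⟪β₃, β₂⟫ := real_inner_comm _ _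
    rcases abs_cases ⟪β₂, β₃⟫ with ⟨ha, _⟩ | ⟨ha, _⟩ <;> rw [ha] <;> linarith
  -- integrality
  obtain ⟨m12, hm12⟩ := hint β₁ hm1 β₂ hm2
  obtain ⟨m13, hm13⟩ := hint β₁ hm1 β₃ hm3
  obtain ⟨m23, hm23⟩ := hint β₂ hm2 β₃ hm3
  set s₂ : ℤ := if 0 ≤ m12 then 1 else -1 with hs₂
  set s₃ : ℤ := if 0 ≤ m13 then 1 else -1 with hs₃
  have habs2 : s₂ * m12 = |m12| := by
    rcases le_or_gt 0 m12 with h | h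
    · rw [hs₂, if_pos h, abs_of_nonneg h, one_mul]
    · rw [hs₂, if_neg (not_le.mpr h), abs_of_neg h, neg_one_mul]
  have habs3 : s₃ * m13 = |m13| := by
    rcases le_or_gt 0 m13 with h | h
    · rw [hs₃, if_pos h, abs_of_nonneg h, one_mul]
    · rw [hs₃, if_neg (not_le.mpr h), abs_of_neg h, neg_one_mul]
  have hs₂1 : s₂ = 1 ∨ s₂ = -1 := by
    rcases le_or_gt 0 m12 with h | h
    · left; rw [hs₂, if_pos h]
    · right; rw [hs₂, if_neg (not_le.mpr h)]
  have hs₃1 : s₃ = 1 ∨ s₃ = -1 := by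
    rcases le_or_gt 0 m13 with h | h
    · left; rw [hs₃, if_pos h]
    · right; rw [hs₃, if_neg (not_le.mpr h)]
  refine ⟨(s₂ : ℝ), (s₃ : ℝ), ?_, ?_, s₂ * m12, s₃ * m13, s₂ * s₃ * m23, ?_, ?_, ?_, ?_, ?_, ?_, ?_, ?_⟩
  · rcases hs₂1 with h | h <;> rw [h] <;> push_cast <;> simp
  · rcases hs₃1 with h | h <;> rw [h] <;> push_cast <;> simp
  · rw [real_inner_smul_right, hm12]; push_cast; ring
  · rw [real_inner_smul_right, hm13]; push_cast; ring
  · rw [real_inner_smul_left, real_inner_smul_right, hm23]; push_cast; ring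
  · rw [habs2]; push_cast; positivity
  · rw [habs2]
    have : (|m12| : ℝ) = |(m12 : ℝ)| := by push_cast; ring
    rw [Int.cast_abs, ← hm12]
    linarith [key12]
  · rw [habs3]; push_cast; positivity
  · rw [habs3, Int.cast_abs, ← hm13]
    linarith [key13]
  · have : |((s₂ * s₃ * m23 : ℤ) : ℝ)| = |(m23 : ℝ)| := by
      push_cast
      rw [abs_mul, abs_mul]
      rcases hs₂1 with h | h <;> rcases hs₃1 with h' | h' <;> rw [h, h'] <;> push_cast <;> simp
    rw [this, ← hm23]
    exact key23
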